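/- Let X_{2i+1} and X_{3i} be given as follows: conditioned on X_{2i} ≤ Cγ^{j+1}, X_{2i+1} is a sum of independent Bernoulli trials with E[X_{2i+1}] ≤ Cγ^{j+1}·φ, and conditioned on X_{2i+1}, X_{2i+2} is a sum of independent Bernoulli trials with E[X_{2i+2}] ≤ X_{2i+1}·ψ. With γ = 1/√(φψ), C = 15/(δ²·min{φ, ψ, φψ}), and 0 < δ < min{1, (φψ)^{-1/4} − 1}, the probability that X_{2i+2} ≥ Cγ^j is at most 2·exp(−5γ^{j+1}). -/

import Mathlib

open MeasureTheory ProbabilityTheory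

/-- The distribution of a sum of independent Poisson (Bernoulli) trials with success
probabilities `q i`. -/
noncomputable def poissonBinomial {m : ℕ} (q : Fin m → ENNReal) (h : ∀ i, q i ≤ 1) :
    Measure ℕ :=
  Measure.map (fun b : Fin m → Bool => (Finset.univ.filter fun i => b i).card)
    (Measure.pi fun i => (PMF.bernoulli (q i).toNNReal (by simpa using ENNReal.toNNReal_mono ENNReal.one_ne_top (h i))).toMeasure)

/-- A measure on `ℕ` is the law of a sum of independent Poisson trials with total mean at
most `b`. -/
def IsPoissonBinomialWithMean (ν : Measure ℕ) (b : ℝ) : Prop :=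
  ∃ (m : ℕ) (q : Fin m → ENNReal) (h : ∀ i, q i ≤ 1),
    ν = poissonBinomial q h ∧ (∑ i, q i) ≤ ENNReal.ofReal b

lemma log_deriv_aux (x : ℝ) (hx : 0 ≤ x) : x / (1 + x) ≤ Real.log (1 + x) := by
  have h := Real.one_sub_inv_le_log_of_pos (show (0:ℝ) < 1 + x by linarith)
  have : 1 - (1+x)⁻¹ = x / (1+x) := by field_simp; ring
  linarith [this ▸ h]

lemma two_mul_le (x : ℝ) (hx : 0 ≤ x) : 2 * x ≤ (2 + x) * Real.log (1 + x) := by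
  set f : ℝ → ℝ := fun y => (2 + y) * Real.log (1 + y) - 2 * y with hf
  have hder : ∀ y ∈ Set.Ici (0:ℝ), HasDerivAt f (Real.log (1 + y) + (2 + y) / (1 + y) - 2) y := by
    intro y hy
    have h1 : (0:ℝ) < 1 + y := by simp at hy; linarith
    have : HasDerivAt (fun z : ℝ => (2 + z) * Real.log (1 + z))
        (1 * Real.log (1 + y) + (2 + y) * (1 / (1 + y))) y := by
      apply HasDerivAt.mul
      · simpa using (hasDerivAt_id y).const_add 2
      · have := (Real.hasDerivAt_log h1.ne').comp y ((hasDerivAt_id y).const_add 1)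
        simpa [Function.comp_def] using this
    have h2 := this.sub ((hasDerivAt_id y).const_mul 2)
    convert h2 using 1
    · rfl
    · rfl
    · rfl
    · field_simp
  have hmono : MonotoneOn f (Set.Ici 0) := by
    apply monotoneOn_of_deriv_nonneg (convex_Ici 0)
    · apply ContinuousOn.sub
      · exact ((continuousOn_const.add continuousOn_id).mul
          ((continuousOn_const.add continuousOn_id).log (fun y hy => by
            simp only [Set.mem_Ici] at hy
            exact ne_of_gt (by show (0:ℝ) < 1 + y; linarith))))
      · exact continuousOn_const.mul continuousOn_id
    · intro y hy
      exact ((hder y (interior_subset hy)).differentiableAt).differentiableWithinAt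
    · intro y hy
      rw [interior_Ici] at hy
      rw [(hder y (Set.mem_Ici.mpr (le_of_lt hy))).deriv]
      have h1 : (0:ℝ) < 1 + y := by linarith [Set.mem_Ioi.mp hy]
      have h2 := log_deriv_aux y (le_of_lt hy)
      have : (2 + y) / (1 + y) - 2 = -(y / (1 + y)) := by field_simp; ring
      linarith
  have := hmono (Set.self_mem_Ici) (Set.mem_Ici.mpr hx) hx
  simp [hf] at this
  linarith

lemma pb_lintegral {m : ℕ} (q : Fin m → ENNReal) (h : ∀ i, q i ≤ 1) (g : ℕ → ENNReal) :
    ∫⁻ n, g n ∂(poissonBinomial q h)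
      = ∑ x : Fin m → Bool, g (Finset.univ.filter fun i => x i).card
          * ∏ i, (PMF.bernoulli (q i).toNNReal (by simpa using ENNReal.toNNReal_mono ENNReal.one_ne_top (h i))).toMeasure {x i} := by
  rw [poissonBinomial, lintegral_map (measurable_of_countable g) (measurable_of_finite _),
    lintegral_fintype]
  congr 1; ext x
  rw [← Set.univ_pi_singleton, Measure.pi_pi]

lemma pb_mgf {m : ℕ} (q : Fin m → ENNReal) (h : ∀ i, q i ≤ 1) (t b : ℝ) (ht : 0 ≤ t)
    (hb : ∑ i, (q i).toReal ≤ b) :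
    ∫⁻ n, ENNReal.ofReal (Real.exp (t * n)) ∂(poissonBinomial q h)
      ≤ ENNReal.ofReal (Real.exp (b * (Real.exp t - 1))) := by
  have hfin : ∀ i, q i ≠ ⊤ := fun i => (lt_of_le_of_lt (h i) (by norm_num)).ne
  rw [pb_lintegral]
  have key : ∀ x : Fin m → Bool,
      ENNReal.ofReal (Real.exp (t * (Finset.univ.filter fun i => x i).card))
          * ∏ i, (PMF.bernoulli (q i).toNNReal (by simpa using ENNReal.toNNReal_mono ENNReal.one_ne_top (h i))).toMeasure {x i}
        = ∏ i, (ENNReal.ofReal (Real.exp (t * if x i then 1 else 0))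
            * (PMF.bernoulli (q i).toNNReal (by simpa using ENNReal.toNNReal_mono ENNReal.one_ne_top (h i))).toMeasure {x i}) := by
    intro x
    rw [Finset.prod_mul_distrib]
    congr 1
    rw [← ENNReal.ofReal_prod_of_nonneg (fun i _ => (Real.exp_pos _).le), ← Real.exp_sum]
    congr 2
    rw [Finset.card_filter, ← Finset.mul_sum, Nat.cast_sum]
    congr 1
    exact Finset.sum_congr rfl (fun i _ => by split <;> simp
    )
  simp_rw [key]
  have psum := Fintype.prod_sum (κ := fun _ : Fin m => Bool)
    (f := fun i y => ENNReal.ofReal (Real.exp (t * if y then 1 else 0))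
      * (PMF.bernoulli (q i).toNNReal (by simpa using ENNReal.toNNReal_mono ENNReal.one_ne_top (h i))).toMeasure {y})
  rw [← psum]
  have factor : ∀ i, (∑ x : Bool, ENNReal.ofReal (Real.exp (t * if x then 1 else 0))
      * (PMF.bernoulli (q i).toNNReal (by simpa using ENNReal.toNNReal_mono ENNReal.one_ne_top (h i))).toMeasure {x})
      ≤ ENNReal.ofReal (Real.exp ((q i).toReal * (Real.exp t - 1))) := by
    intro i
    set p := (q i).toReal with hp
    have hp1 : p ≤ 1 := ENNReal.toReal_le_of_le_ofReal one_pos.le (by simpa using h i)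
    have hp0 : 0 ≤ p := ENNReal.toReal_nonneg
    have hq2 : q i = ENNReal.ofReal p := (ENNReal.ofReal_toReal (hfin i)).symm
    have e1 : (1:ENNReal) - ENNReal.ofReal p = ENNReal.ofReal (1 - p) := by
      rw [ENNReal.ofReal_sub _ hp0, ENNReal.ofReal_one]
    rw [Fintype.sum_bool]
    simp only [PMF.toMeasure_apply_singleton _ _ (measurableSet_singleton _),
      PMF.bernoulli, PMF.ofFintype_apply, Bool.cond_true, Bool.cond_false, ENNReal.coe_sub,
      ENNReal.coe_one, ENNReal.coe_toNNReal (hfin i)]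
    have i1 : (if True then (1:ℝ) else 0) = 1 := if_pos trivial
    have i2 : (if (false:Bool) = true then (1:ℝ) else 0) = 0 := by simp
    rw [i1, i2, mul_one, mul_zero, Real.exp_zero, ENNReal.ofReal_one, one_mul, hq2, e1,
      ← ENNReal.ofReal_mul (Real.exp_pos t).le,
      ← ENNReal.ofReal_add (by positivity) (by linarith)]
    apply ENNReal.ofReal_le_ofReal
    nlinarith [Real.add_one_le_exp (p * (Real.exp t - 1))]
  calc (∏ i, ∑ x : Bool, ENNReal.ofReal (Real.exp (t * if x then 1 else 0))
          * (PMF.bernoulli (q i).toNNReal (by simpa using ENNReal.toNNReal_mono ENNReal.one_ne_top (h i))).toMeasure {x})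
      ≤ ∏ i, ENNReal.ofReal (Real.exp ((q i).toReal * (Real.exp t - 1))) :=
        Finset.prod_le_prod' (fun i _ => factor i)
    _ = ENNReal.ofReal (Real.exp ((∑ i, (q i).toReal) * (Real.exp t - 1))) := by
        rw [← ENNReal.ofReal_prod_of_nonneg (fun i _ => (Real.exp_pos _).le), ← Real.exp_sum,
          ← Finset.sum_mul]
    _ ≤ _ := by
        apply ENNReal.ofReal_le_ofReal
        apply Real.exp_le_exp.mpr
        apply mul_le_mul_of_nonneg_right hb
        have := Real.add_one_le_exp t
        linarith

lemma pb_chernoff {ν : Measure ℕ} {b : ℝ} (hb : 0 ≤ b) (hν : IsPoissonBinomialWithMean ν b)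
    (t a : ℝ) (ht : 0 ≤ t) :
    ν {n : ℕ | a ≤ (n : ℝ)} ≤ ENNReal.ofReal (Real.exp (b * (Real.exp t - 1) - t * a)) := by
  obtain ⟨m, q, h, rfl, hsum⟩ := hν
  have hfin : ∀ i, q i ≠ ⊤ := fun i => (lt_of_le_of_lt (h i) (by norm_num)).ne
  have hsum' : ∑ i, (q i).toReal ≤ b := by
    rw [← ENNReal.toReal_sum (fun i _ => hfin i)]
    exact ENNReal.toReal_le_of_le_ofReal hb hsum
  have hmgf := pb_mgf q h t b ht hsum'
  set ε : ENNReal := ENNReal.ofReal (Real.exp (t * a)) with hε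
  have hε0 : ε ≠ 0 := by simp [hε, (Real.exp_pos _).le, Real.exp_pos]
  have hεtop : ε ≠ ⊤ := ENNReal.ofReal_ne_top
  have hsub : {n : ℕ | a ≤ (n : ℝ)} ⊆ {n : ℕ | ε ≤ ENNReal.ofReal (Real.exp (t * n))} := by
    intro n hn
    exact ENNReal.ofReal_le_ofReal (Real.exp_le_exp.mpr (mul_le_mul_of_nonneg_left hn ht))
  calc (poissonBinomial q h) {n : ℕ | a ≤ (n:ℝ)}
      ≤ (poissonBinomial q h) {n : ℕ | ε ≤ ENNReal.ofReal (Real.exp (t * n))} :=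
        measure_mono hsub
    _ ≤ (∫⁻ n, ENNReal.ofReal (Real.exp (t * n)) ∂(poissonBinomial q h)) / ε := by
        rw [ENNReal.le_div_iff_mul_le (Or.inl hε0) (Or.inl hεtop), mul_comm]
        exact mul_meas_ge_le_lintegral (measurable_of_countable _) ε
    _ ≤ ENNReal.ofReal (Real.exp (b * (Real.exp t - 1))) / ε :=
        ENNReal.div_le_div_right hmgf ε
    _ = ENNReal.ofReal (Real.exp (b * (Real.exp t - 1) - t * a)) := by
        rw [hε, ← ENNReal.ofReal_div_of_pos (Real.exp_pos _), ← Real.exp_sub]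

lemma pb_chernoff_mul {ν : Measure ℕ} {b b' δ a : ℝ} (hb : 0 ≤ b) (hbb : b ≤ b')
    (hν : IsPoissonBinomialWithMean ν b) (hδ0 : 0 < δ) (hδ1 : δ ≤ 1)
    (ha : (1 + δ) * b' ≤ a) :
    ν {n : ℕ | a ≤ (n : ℝ)} ≤ ENNReal.ofReal (Real.exp (-(δ ^ 2 * b' / 3))) := by
  have hd1 : (0:ℝ) < 1 + δ := by linarith
  have hL0 : 0 ≤ Real.log (1 + δ) := Real.log_nonneg (by linarith)
  refine (pb_chernoff hb hν (Real.log (1 + δ)) a hL0).trans (ENNReal.ofReal_le_ofReal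
    (Real.exp_le_exp.mpr ?_))
  rw [Real.exp_log hd1]
  set L := Real.log (1 + δ) with hLdef
  have hL : 2 * δ ≤ (2 + δ) * L := two_mul_le δ hδ0.le
  have hb' : 0 ≤ b' := hb.trans hbb
  -- b * ((1+δ) - 1) - L * a ≤ -(δ^2 * b' / 3)
  have h1 : L * ((1 + δ) * b') ≤ L * a := mul_le_mul_of_nonneg_left ha hL0
  have h2 : (2 * δ) * ((1 + δ) * b') ≤ ((2 + δ) * L) * ((1 + δ) * b') :=
    mul_le_mul_of_nonneg_right hL (by positivity)
  have h3 : b * ((1 + δ) - 1) ≤ b' * δ := by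
    have := mul_le_mul_of_nonneg_right hbb hδ0.le
    linarith
  nlinarith [mul_le_mul_of_nonneg_left h1 (show (0:ℝ) ≤ 2 + δ by linarith),
    mul_pos hδ0 hδ0, mul_nonneg (mul_nonneg hδ0.le hδ0.le) hb']

/-- two-step Chernoff. `X₁` (= `X_{2i+1}`) is a sum of independent Bernoulli
trials with mean at most `Cγ^{j+1}·φ`, and conditionally on `X₁ = x`, `X₂` (= `X_{2i+2}`)
is a sum of independent Bernoulli trials with mean at most `ψ·x`. With `γ = 1/√(φψ)`,
`C = 15/(δ²·min{φ,ψ,φψ})` and `0 < δ < min{1, (φψ)^{-1/4} − 1}`,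
`Pr[X₂ ≥ Cγ^j] ≤ 2·exp(−5γ^{j+1})`. -/
theorem stmt16 {Ω : Type*} [MeasurableSpace Ω] (μ : Measure Ω) [IsProbabilityMeasure μ]
    (φ ψ δ C γ : ℝ) (hφ : 0 < φ) (hψ : 0 < ψ) (hφψ : φ * ψ < 1)
    (hγ : γ = 1 / Real.sqrt (φ * ψ))
    (hC : C = 15 / (δ ^ 2 * min (min φ ψ) (φ * ψ)))
    (hδ0 : 0 < δ) (hδ1 : δ < min 1 ((φ * ψ) ^ (-(1 : ℝ) / 4) - 1))
    (j : ℕ) (X1 X2 : Ω → ℕ) (hm1 : Measurable X1) (hm2 : Measurable X2)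
    (h1 : IsPoissonBinomialWithMean (μ.map X1) (C * γ ^ (j + 1) * φ))
    (h2 : ∀ x : ℕ, μ {ω | X1 ω = x} ≠ 0 →
      IsPoissonBinomialWithMean ((μ[|{ω | X1 ω = x}]).map X2) (ψ * x)) :
    μ {ω | C * γ ^ j ≤ (X2 ω : ℝ)} ≤ ENNReal.ofReal (2 * Real.exp (-5 * γ ^ (j + 1))) := by
  -- numeric setup
  have hδle1 : δ ≤ 1 := (lt_of_lt_of_le hδ1 (min_le_left _ _)).le
  have hδlt : δ < (φ * ψ) ^ (-(1 : ℝ) / 4) - 1 := lt_of_lt_of_le hδ1 (min_le_right _ _)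
  have hφψ0 : 0 < φ * ψ := mul_pos hφ hψ
  have hsq : 0 < Real.sqrt (φ * ψ) := Real.sqrt_pos.mpr hφψ0
  have hγ0 : 0 < γ := by rw [hγ]; positivity
  have hγp : ∀ k : ℕ, (0:ℝ) < γ ^ k := fun k => pow_pos hγ0 k
  have hmin : 0 < min (min φ ψ) (φ * ψ) := lt_min (lt_min hφ hψ) hφψ0
  have hC0 : 0 < C := by rw [hC]; positivity
  have hδ2C : δ ^ 2 * C = 15 / min (min φ ψ) (φ * ψ) := by
    rw [hC]; field_simp
  have key1 : 15 ≤ δ ^ 2 * C * φ := by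
    rw [hδ2C, div_mul_eq_mul_div, le_div_iff₀ hmin]
    have h : min (min φ ψ) (φ * ψ) ≤ φ := le_trans (min_le_left _ _) (min_le_left _ _)
    nlinarith [hmin]
  have key2 : 15 ≤ δ ^ 2 * C * (φ * ψ) := by
    rw [hδ2C, div_mul_eq_mul_div, le_div_iff₀ hmin]
    have h := (min_le_right (min φ ψ) (φ * ψ))
    nlinarith [hmin]
  have hγsq : γ * (φ * ψ) = Real.sqrt (φ * ψ) := by
    rw [hγ, one_div, inv_mul_eq_div, div_eq_iff hsq.ne']
    exact (Real.mul_self_sqrt hφψ0.le).symm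
  have hsqlt2 : (1 + δ) ^ 2 * Real.sqrt (φ * ψ) ≤ 1 := by
    have h4 : (0:ℝ) < (φ * ψ) ^ (-(1 : ℝ) / 4) := Real.rpow_pos_of_pos hφψ0 _
    have h5 : 1 + δ < (φ * ψ) ^ (-(1 : ℝ) / 4) := by linarith
    have h6 : (1 + δ) ^ 2 < ((φ * ψ) ^ (-(1 : ℝ) / 4)) ^ 2 := by nlinarith
    have h7 : ((φ * ψ) ^ (-(1 : ℝ) / 4)) ^ 2 = (φ * ψ) ^ (-(1 : ℝ) / 2) := by
      rw [← Real.rpow_natCast ((φ * ψ) ^ (-(1 : ℝ) / 4)) 2, ← Real.rpow_mul hφψ0.le]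
      norm_num
    have h8 : (φ * ψ) ^ (-(1 : ℝ) / 2) * Real.sqrt (φ * ψ) = 1 := by
      rw [Real.sqrt_eq_rpow, ← Real.rpow_add hφψ0]
      norm_num
    nlinarith [hsq]
  -- constants
  set b₁ : ℝ := C * γ ^ (j + 1) * φ with hb₁
  set a₁ : ℝ := (1 + δ) * b₁ with ha₁
  set b₂ : ℝ := ψ * a₁ with hb₂
  set a₂ : ℝ := C * γ ^ j with hha₂
  have hb₁0 : 0 ≤ b₁ := by positivity
  have ha₁0 : 0 ≤ a₁ := by positivity
  have hb₂0 : 0 ≤ b₂ := by positivity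
  have key3 : (1 + δ) * b₂ ≤ a₂ := by
    have e1 : (1 + δ) * b₂ = (1 + δ) ^ 2 * C * (γ ^ j * (γ * (φ * ψ))) := by
      rw [hb₂, ha₁, hb₁, pow_succ]; ring
    rw [e1, hγsq, hha₂]
    calc (1 + δ) ^ 2 * C * (γ ^ j * Real.sqrt (φ * ψ))
        = (C * γ ^ j) * ((1 + δ) ^ 2 * Real.sqrt (φ * ψ)) := by ring
      _ ≤ (C * γ ^ j) * 1 := by
          apply mul_le_mul_of_nonneg_left hsqlt2 (by positivity)
      _ = C * γ ^ j := mul_one _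
  set c : ENNReal := ENNReal.ofReal (Real.exp (-5 * γ ^ (j + 1))) with hc
  have exp1 : ENNReal.ofReal (Real.exp (-(δ ^ 2 * b₁ / 3))) ≤ c := by
    apply ENNReal.ofReal_le_ofReal
    apply Real.exp_le_exp.mpr
    have e : δ ^ 2 * b₁ = (δ ^ 2 * C * φ) * γ ^ (j + 1) := by rw [hb₁]; ring
    have e2 := mul_le_mul_of_nonneg_right key1 (hγp (j + 1)).le
    linarith
  have exp2 : ENNReal.ofReal (Real.exp (-(δ ^ 2 * b₂ / 3))) ≤ c := by
    apply ENNReal.ofReal_le_ofReal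
    apply Real.exp_le_exp.mpr
    have e1 : δ ^ 2 * b₂ = (1 + δ) * (δ ^ 2 * C * (φ * ψ) * γ ^ (j + 1)) := by
      rw [hb₂, ha₁, hb₁]; ring
    have e2 : 15 * γ ^ (j + 1) ≤ δ ^ 2 * C * (φ * ψ) * γ ^ (j + 1) :=
      mul_le_mul_of_nonneg_right key2 (hγp _).le
    have e3 : δ ^ 2 * C * (φ * ψ) * γ ^ (j + 1) ≤ (1 + δ) * (δ ^ 2 * C * (φ * ψ) * γ ^ (j + 1)) :=
      le_mul_of_one_le_left (by positivity) (by linarith)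
    linarith
  -- events
  set A : Set Ω := {ω | a₁ ≤ (X1 ω : ℝ)} with hA
  set S : Set Ω := {ω | a₂ ≤ (X2 ω : ℝ)} with hS
  have hmeasA : MeasurableSet A := hm1 (MeasurableSet.of_discrete (s := {n : ℕ | a₁ ≤ (n:ℝ)}))
  have stepA : μ A ≤ c := by
    have e : μ A = (μ.map X1) {n : ℕ | a₁ ≤ (n : ℝ)} := by
      rw [Measure.map_apply hm1 MeasurableSet.of_discrete]
      rfl
    rw [e]
    exact (pb_chernoff_mul hb₁0 le_rfl h1 hδ0 hδle1 ha₁.symm.le).trans exp1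
  have stepx : ∀ x : ℕ, (x : ℝ) < a₁ →
      μ ({ω | X1 ω = x} ∩ S) ≤ c * μ {ω | X1 ω = x} := by
    intro x hx
    by_cases h0 : μ {ω | X1 ω = x} = 0
    · calc μ ({ω | X1 ω = x} ∩ S) ≤ μ {ω | X1 ω = x} :=
            measure_mono Set.inter_subset_left
        _ = 0 := h0
        _ ≤ _ := zero_le
    · have hs : MeasurableSet {ω | X1 ω = x} := hm1 (measurableSet_singleton x)
      have hPB := h2 x h0
      have hcond : ((μ[|{ω | X1 ω = x}]).map X2) {n : ℕ | a₂ ≤ (n : ℝ)} ≤ c := by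
        refine (pb_chernoff_mul (b := ψ * x) (b' := b₂) (by positivity) ?_ hPB hδ0 hδle1
          key3).trans exp2
        rw [hb₂]
        exact mul_le_mul_of_nonneg_left hx.le hψ.le
      have emap : ((μ[|{ω | X1 ω = x}]).map X2) {n : ℕ | a₂ ≤ (n : ℝ)}
          = (μ[|{ω | X1 ω = x}]) S := by
        rw [Measure.map_apply hm2 MeasurableSet.of_discrete]
        rfl
      rw [emap, cond_apply hs] at hcond
      have hfin : μ {ω | X1 ω = x} ≠ ⊤ := measure_ne_top μ _
      calc μ ({ω | X1 ω = x} ∩ S)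
          = μ {ω | X1 ω = x} * ((μ {ω | X1 ω = x})⁻¹ * μ ({ω | X1 ω = x} ∩ S)) := by
            rw [← mul_assoc, ENNReal.mul_inv_cancel h0 hfin, one_mul]
        _ ≤ μ {ω | X1 ω = x} * c := mul_le_mul_of_nonneg_left hcond zero_le
        _ = c * μ {ω | X1 ω = x} := mul_comm _ _
  have stepB : μ (S ∩ Aᶜ) ≤ c := by
    have hcover : S ∩ Aᶜ ⊆ ⋃ x : ℕ, ({ω | X1 ω = x} ∩ (S ∩ Aᶜ)) := by
      intro ω hω
      exact Set.mem_iUnion.mpr ⟨X1 ω, rfl, hω⟩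
    calc μ (S ∩ Aᶜ) ≤ ∑' x : ℕ, μ ({ω | X1 ω = x} ∩ (S ∩ Aᶜ)) :=
          (measure_mono hcover).trans (measure_iUnion_le _)
      _ ≤ ∑' x : ℕ, c * μ {ω | X1 ω = x} := by
          apply ENNReal.tsum_le_tsum
          intro x
          by_cases hx : (x : ℝ) < a₁
          · refine le_trans (measure_mono ?_) (stepx x hx)
            exact fun ω ⟨hω1, hω2, _⟩ => ⟨hω1, hω2⟩
          · have : {ω | X1 ω = x} ∩ (S ∩ Aᶜ) = ∅ := by
              ext ω
              simp only [Set.mem_inter_iff, Set.mem_setOf_eq, Set.mem_compl_iff,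
                Set.mem_empty_iff_false, iff_false, not_and, hA]
              intro hω1 _ hω2
              exact hω2 (by rw [hω1]; exact not_lt.mp hx)
            rw [this]
            simp
      _ = c * ∑' x : ℕ, μ {ω | X1 ω = x} := ENNReal.tsum_mul_left
      _ = c * μ Set.univ := by
          congr 1
          rw [← measure_iUnion]
          · congr 1
            ext ω
            simp
          · intro x y hxy
            apply Set.disjoint_left.mpr
            intro ω h1 h2
            exact hxy (h1.symm.trans h2)
          · exact fun x => hm1 (measurableSet_singleton x)
      _ = c := by rw [measure_univ, mul_one]
  calc μ {ω | C * γ ^ j ≤ (X2 ω : ℝ)} = μ S := rfl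
    _ ≤ μ (A ∪ (S ∩ Aᶜ)) := by
        apply measure_mono
        intro ω hω
        by_cases hA' : ω ∈ A
        · exact Or.inl hA'
        · exact Or.inr ⟨hω, hA'⟩
    _ ≤ μ A + μ (S ∩ Aᶜ) := measure_union_le _ _
    _ ≤ c + c := add_le_add stepA stepB
    _ = ENNReal.ofReal (2 * Real.exp (-5 * γ ^ (j + 1))) := by
        rw [hc, ← ENNReal.ofReal_add (Real.exp_pos _).le (Real.exp_pos _).le, two_mul]
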